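/- For every integer n ≥ 3, the sum of the blocks in the first block row of the matrix M_n equals the compacted matrix of rank n, i.e. Σ_{k=1}^{2n} M_{1k} = C_n. Equivalently, with k = 2n−1: T_k + J_k·T_k·J_k + U^n_k + (n−2)·(U^{n−1}_k + U^{n+1}_k) = C_n. -/

import Mathlib

/-- `t` lies in the cyclic interval from `a` to `b` in `ℤ/m` (indices reduced mod `m`). -/
def inCyc (m t a b : ℕ) : Prop :=
  (t + m - a % m) % m ≤ (b % m + m - a % m) % m

instance (m t a b : ℕ) : Decidable (inCyc m t a b) := by
  unfold inCyc; infer_instance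

/-- The defining condition for the entries of the Markov matrix `M_n`:
`Mcond n l t i j` holds iff `m^{(l+1)(t+1)}_{(i+1)(j+1)} = 1`, where `l, t` range
over `{0, …, 2n-1}` and `i, j` over `{0, …, 2n-2}` (zero-indexed versions of the
one-indexed block indices `{1, …, 2n}` and entry indices `{1, …, 2n-1}`). -/
def Mcond (n l t i j : ℕ) : Prop :=
  (i + 1 ≤ n - 3 ∧ j = i + 1 ∧ t = (l + n + 1) % (2 * n)) ∨
  (i = n - 3 ∧ (j = n - 2 ∨ j = n - 1) ∧ t = (l + n + 1) % (2 * n)) ∨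
  (i = n - 2 ∧ ((n ≤ j ∧ t = (l + n + 1) % (2 * n)) ∨
      inCyc (2 * n) t (l + n + 2) (l + 2 * n - 1))) ∨
  (i = n - 1 ∧ t = l) ∨
  (i = n ∧ ((j + 2 ≤ n ∧ t = (l + n - 1) % (2 * n)) ∨
      inCyc (2 * n) t (l + 1) (l + n - 2))) ∨
  (i = n + 1 ∧ (j = n - 1 ∨ j = n) ∧ t = (l + n - 1) % (2 * n)) ∨
  (n + 2 ≤ i ∧ j + 1 = i ∧ t = (l + n - 1) % (2 * n))

instance (n l t i j : ℕ) : Decidable (Mcond n l t i j) := by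
  unfold Mcond; infer_instance

/-- The Markov matrix `M_n`, a `2n(2n-1) × 2n(2n-1)` `(0,1)`-matrix written as a
`2n × 2n` array of `(2n-1) × (2n-1)` blocks. -/
def Mmat (n : ℕ) :
    Matrix (Fin (2 * n) × Fin (2 * n - 1)) (Fin (2 * n) × Fin (2 * n - 1)) ℝ :=
  Matrix.of fun p q => if Mcond n p.1.val q.1.val p.2.val q.2.val then 1 else 0

/-- Entry `(i+1, j+1)` of the compacted matrix `C_n` of rank `n` (zero-indexed
`i, j ∈ {0, …, 2n-2}` corresponding to one-indexed indices in `{1, …, 2n-1}`). -/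
def Cfun (n i j : ℕ) : ℝ :=
  if i + 1 ≤ n - 3 ∧ j = i + 1 then 1
  else if i = n - 3 ∧ (j = n - 2 ∨ j = n - 1) then 1
  else if i = n - 2 ∧ j + 1 ≤ n then (n : ℝ) - 2
  else if i = n - 2 ∧ n ≤ j then (n : ℝ) - 1
  else if i = n - 1 then 1
  else if i = n ∧ j + 2 ≤ n then (n : ℝ) - 1
  else if i = n ∧ n - 1 ≤ j then (n : ℝ) - 2
  else if i = n + 1 ∧ (j = n - 1 ∨ j = n) then 1
  else if n + 2 ≤ i ∧ j + 1 = i then 1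
  else 0

/-- The compacted matrix `C_n` of rank `n`, of size `(2n-1) × (2n-1)`. -/
def Cmat (n : ℕ) : Matrix (Fin (2 * n - 1)) (Fin (2 * n - 1)) ℝ :=
  Matrix.of fun i j => Cfun n i.val j.val

/-- The `k × k` permutation matrix with ones on the anti-diagonal:
`(J_k)_{ij} = 1` iff `j = k + 1 - i` (one-indexed). -/
def Jmat (k : ℕ) : Matrix (Fin k) (Fin k) ℝ :=
  Matrix.of fun i j => if i.val + j.val + 1 = k then 1 else 0

/-- The `k × k` matrix `U^r_k` whose `r`-th row (one-indexed) consists of ones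
and whose other entries are `0`. -/
def Umat (k r : ℕ) : Matrix (Fin k) (Fin k) ℝ :=
  Matrix.of fun i _ => if i.val + 1 = r then 1 else 0

/-- The matrix `T_k` for `k = 2n - 1` (so that the middle index is `n`),
one-indexed: the `(i,j)` entry is `1` iff `j = i+1` and `1 ≤ i ≤ n-3`, or
`i = n-2` and `j ∈ {n-1, n}`, or `i = n-1` and `n+1 ≤ j ≤ k`. -/
def Tmat (n : ℕ) : Matrix (Fin (2 * n - 1)) (Fin (2 * n - 1)) ℝ :=
  Matrix.of fun i j =>
    if (j.val = i.val + 1 ∧ i.val + 1 ≤ n - 3) ∨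
       (i.val = n - 3 ∧ (j.val = n - 2 ∨ j.val = n - 1)) ∨
       (i.val = n - 2 ∧ n ≤ j.val) then 1 else 0

lemma inCyc1 (n t : ℕ) (hn : 3 ≤ n) (ht : t < 2*n) :
    inCyc (2*n) t (0+n+2) (0+2*n-1) ↔ n+2 ≤ t := by
  unfold inCyc
  rw [Nat.mod_eq_of_lt (show 0+n+2 < 2*n by omega),
      Nat.mod_eq_of_lt (show 0+2*n-1 < 2*n by omega),
      show 0+2*n-1 + 2*n - (0+n+2) = 2*n + (n-3) by omega,
      Nat.add_mod_left, Nat.mod_eq_of_lt (show n-3 < 2*n by omega)]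
  rcases le_or_gt (n+2) t with h | h
  · rw [show t + 2*n - (0+n+2) = 2*n + (t - (n+2)) by omega,
        Nat.add_mod_left, Nat.mod_eq_of_lt (by omega)]
    omega
  · rw [Nat.mod_eq_of_lt (by omega)]
    omega

lemma inCyc2 (n t : ℕ) (hn : 3 ≤ n) (ht : t < 2*n) :
    inCyc (2*n) t (0+1) (0+n-2) ↔ 1 ≤ t ∧ t ≤ n-2 := by
  unfold inCyc
  rw [Nat.mod_eq_of_lt (show 0+1 < 2*n by omega),
      Nat.mod_eq_of_lt (show 0+n-2 < 2*n by omega),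
      show 0+n-2 + 2*n - (0+1) = 2*n + (n-3) by omega,
      Nat.add_mod_left, Nat.mod_eq_of_lt (show n-3 < 2*n by omega)]
  rcases le_or_gt 1 t with h | h
  · rw [show t + 2*n - (0+1) = 2*n + (t-1) by omega,
        Nat.add_mod_left, Nat.mod_eq_of_lt (by omega)]
    omega
  · rw [show t + 2*n - (0+1) = 2*n-1 by omega, Nat.mod_eq_of_lt (by omega)]
    omega

lemma mcond_iff (n i j t : ℕ) (hn : 3 ≤ n) (ht : t < 2*n) :
    Mcond n 0 t i j ↔
      ((i+1 ≤ n-3 ∧ j = i+1 ∧ t = n+1) ∨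
       (i = n-3 ∧ (j = n-2 ∨ j = n-1) ∧ t = n+1) ∨
       (i = n-2 ∧ ((n ≤ j ∧ t = n+1) ∨ n+2 ≤ t)) ∨
       (i = n-1 ∧ t = 0) ∨
       (i = n ∧ ((j+2 ≤ n ∧ t = n-1) ∨ (1 ≤ t ∧ t ≤ n-2))) ∨
       (i = n+1 ∧ (j = n-1 ∨ j = n) ∧ t = n-1) ∨
       (n+2 ≤ i ∧ j+1 = i ∧ t = n-1)) := by
  unfold Mcond
  rw [inCyc1 n t hn ht, inCyc2 n t hn ht,
      Nat.mod_eq_of_lt (show 0+n+1 < 2*n by omega),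
      Nat.mod_eq_of_lt (show 0+n-1 < 2*n by omega)]
  simp only [zero_add]

lemma sum_ind (m : ℕ) (P : ℕ → Prop) [DecidablePred P] (s : Finset ℕ)
    (hsub : s ⊆ Finset.range m) (hs : ∀ t < m, (P t ↔ t ∈ s)) :
    (∑ t : Fin m, if P t.val then (1:ℝ) else 0) = s.card := by
  rw [Fin.sum_univ_eq_sum_range (fun t => if P t then (1:ℝ) else 0) m]
  have h1 : ∑ t ∈ Finset.range m, (if P t then (1:ℝ) else 0)
      = ∑ t ∈ Finset.range m, (if t ∈ s then (1:ℝ) else 0) := by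
    refine Finset.sum_congr rfl fun t ht => ?_
    rw [Finset.mem_range] at ht
    by_cases h : P t
    · rw [if_pos h, if_pos ((hs t ht).1 h)]
    · rw [if_neg h, if_neg (fun hm => h ((hs t ht).2 hm))]
  rw [h1, Finset.sum_ite_mem, Finset.inter_eq_right.mpr hsub,
      Finset.sum_const, nsmul_eq_mul, mul_one]

lemma Jmul {k : ℕ} (M : Matrix (Fin k) (Fin k) ℝ) (i j : Fin k) :
    (Jmat k * M) i j = M i.rev j := by
  rw [Matrix.mul_apply, Finset.sum_eq_single i.rev]
  · have h1 : Jmat k i i.rev = 1 := by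
      have hik := i.isLt
      simp only [Jmat, Matrix.of_apply, Fin.val_rev]
      rw [if_pos (show i.val + (k - (i.val+1)) + 1 = k by omega)]
    rw [h1, one_mul]
  · intro b _ hb
    have h0 : Jmat k i b = 0 := by
      have : ¬ (i.val + b.val + 1 = k) := fun hk =>
        hb (Fin.ext (by rw [Fin.val_rev]; omega))
      simp [Jmat, this]
    rw [h0, zero_mul]
  · intro h; exact absurd (Finset.mem_univ _) h

lemma mulJ {k : ℕ} (M : Matrix (Fin k) (Fin k) ℝ) (i j : Fin k) :
    (M * Jmat k) i j = M i j.rev := by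
  rw [Matrix.mul_apply, Finset.sum_eq_single j.rev]
  · have h1 : Jmat k j.rev j = 1 := by
      have hjk := j.isLt
      simp only [Jmat, Matrix.of_apply, Fin.val_rev]
      rw [if_pos (show (k - (j.val+1)) + j.val + 1 = k by omega)]
    rw [h1, mul_one]
  · intro b _ hb
    have h0 : Jmat k b j = 0 := by
      have : ¬ (b.val + j.val + 1 = k) := fun hk =>
        hb (Fin.ext (by rw [Fin.val_rev]; omega))
      simp [Jmat, this]
    rw [h0, mul_zero]
  · intro h; exact absurd (Finset.mem_univ _) h

section CfunVals
variable (n i j : ℕ) (hn : 3 ≤ n)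

lemma cfunA (n i j : ℕ) (hn : 3 ≤ n) (h : i+1 ≤ n-3) (hc : j = i+1) : Cfun n i j = 1 := by
  unfold Cfun; rw [if_pos ⟨h, hc⟩]

lemma cfunZ1 (n i j : ℕ) (hn : 3 ≤ n) (h : i+1 ≤ n-3) (hc : j ≠ i+1) : Cfun n i j = 0 := by
  unfold Cfun
  rw [if_neg (by omega), if_neg (by omega), if_neg (by omega), if_neg (by omega),
      if_neg (by omega), if_neg (by omega), if_neg (by omega), if_neg (by omega),
      if_neg (by omega)]

lemma cfunB (n i j : ℕ) (hn : 3 ≤ n) (h : i = n-3) (hc : j = n-2 ∨ j = n-1) : Cfun n i j = 1 := by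
  unfold Cfun; rw [if_neg (by omega), if_pos (by omega)]

lemma cfunZ2 (n i j : ℕ) (hn : 3 ≤ n) (h : i = n-3) (hc : ¬(j = n-2 ∨ j = n-1)) : Cfun n i j = 0 := by
  unfold Cfun
  rw [if_neg (by omega), if_neg (by omega), if_neg (by omega), if_neg (by omega),
      if_neg (by omega), if_neg (by omega), if_neg (by omega), if_neg (by omega),
      if_neg (by omega)]

lemma cfunC (n i j : ℕ) (hn : 3 ≤ n) (h : i = n-2) (hc : j+1 ≤ n) : Cfun n i j = (n:ℝ) - 2 := by
  unfold Cfun; rw [if_neg (by omega), if_neg (by omega), if_pos (by omega)]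

lemma cfunD (n i j : ℕ) (hn : 3 ≤ n) (h : i = n-2) (hc : n ≤ j) : Cfun n i j = (n:ℝ) - 1 := by
  unfold Cfun
  rw [if_neg (by omega), if_neg (by omega), if_neg (by omega), if_pos (by omega)]

lemma cfunE (n i j : ℕ) (hn : 3 ≤ n) (h : i = n-1) : Cfun n i j = 1 := by
  unfold Cfun
  rw [if_neg (by omega), if_neg (by omega), if_neg (by omega), if_neg (by omega),
      if_pos (by omega)]

lemma cfunF (n i j : ℕ) (hn : 3 ≤ n) (h : i = n) (hc : j+2 ≤ n) : Cfun n i j = (n:ℝ) - 1 := by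
  unfold Cfun
  rw [if_neg (by omega), if_neg (by omega), if_neg (by omega), if_neg (by omega),
      if_neg (by omega), if_pos (by omega)]

lemma cfunG (n i j : ℕ) (hn : 3 ≤ n) (h : i = n) (hc : n-1 ≤ j) : Cfun n i j = (n:ℝ) - 2 := by
  unfold Cfun
  rw [if_neg (by omega), if_neg (by omega), if_neg (by omega), if_neg (by omega),
      if_neg (by omega), if_neg (by omega), if_pos (by omega)]

lemma cfunH (n i j : ℕ) (hn : 3 ≤ n) (h : i = n+1) (hc : j = n-1 ∨ j = n) : Cfun n i j = 1 := by
  unfold Cfun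
  rw [if_neg (by omega), if_neg (by omega), if_neg (by omega), if_neg (by omega),
      if_neg (by omega), if_neg (by omega), if_neg (by omega), if_pos (by omega)]

lemma cfunZ6 (n i j : ℕ) (hn : 3 ≤ n) (h : i = n+1) (hc : ¬(j = n-1 ∨ j = n)) : Cfun n i j = 0 := by
  unfold Cfun
  rw [if_neg (by omega), if_neg (by omega), if_neg (by omega), if_neg (by omega),
      if_neg (by omega), if_neg (by omega), if_neg (by omega), if_neg (by omega),
      if_neg (by omega)]

lemma cfunI (n i j : ℕ) (hn : 3 ≤ n) (h : n+2 ≤ i) (hc : j+1 = i) : Cfun n i j = 1 := by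
  unfold Cfun
  rw [if_neg (by omega), if_neg (by omega), if_neg (by omega), if_neg (by omega),
      if_neg (by omega), if_neg (by omega), if_neg (by omega), if_neg (by omega),
      if_pos (by omega)]

lemma cfunZ7 (n i j : ℕ) (hn : 3 ≤ n) (h : n+2 ≤ i) (hc : j+1 ≠ i) : Cfun n i j = 0 := by
  unfold Cfun
  rw [if_neg (by omega), if_neg (by omega), if_neg (by omega), if_neg (by omega),
      if_neg (by omega), if_neg (by omega), if_neg (by omega), if_neg (by omega),
      if_neg (by omega)]

end CfunVals

set_option maxHeartbeats 1000000 in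
set_option linter.unusedVariables false in
lemma part1 (n : ℕ) (hn : 3 ≤ n) (i j : Fin (2 * n - 1)) :
    (∑ t : Fin (2 * n), Mmat n ((⟨0, by positivity⟩ : Fin (2 * n)), i) (t, j))
      = Cmat n i j := by
  have hi : i.val < 2*n-1 := i.isLt
  have hj : j.val < 2*n-1 := j.isLt
  have key : ∀ (s : Finset ℕ), s ⊆ Finset.range (2*n) →
      (∀ t < 2*n, (Mcond n 0 t i.val j.val ↔ t ∈ s)) →
      (∑ t : Fin (2*n), Mmat n ((⟨0, by omega⟩ : Fin (2*n)), i) (t, j)) = s.card :=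
    fun s hsub hs => sum_ind (2*n) (fun t => Mcond n 0 t i.val j.val) s hsub hs
  rcases (show i.val + 1 ≤ n-3 ∨ i.val = n-3 ∨ i.val = n-2 ∨ i.val = n-1 ∨
      i.val = n ∨ i.val = n+1 ∨ n+2 ≤ i.val by omega) with h|h|h|h|h|h|h
  · by_cases hc : j.val = i.val + 1
    · refine (key {n+1} ?_ ?_).trans ?_
      · intro x hx; simp only [Finset.mem_singleton] at hx
        simp only [Finset.mem_range]; omega
      · intro t ht; rw [mcond_iff n i.val j.val t hn ht]
        simp only [Finset.mem_singleton]
        constructor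
        · rintro (h'|h'|h'|h'|h'|h'|h') <;> omega
        · intro h'
          exact Or.inl (by omega)
      · simp only [Cmat, Matrix.of_apply]
        rw [Finset.card_singleton, Nat.cast_one, cfunA n i.val j.val hn h hc]
    · refine (key ∅ ?_ ?_).trans ?_
      · intro x hx; simp at hx
      · intro t ht; rw [mcond_iff n i.val j.val t hn ht]
        simp only [Finset.notMem_empty, iff_false]
        rintro (h'|h'|h'|h'|h'|h'|h') <;> omega
      · simp only [Cmat, Matrix.of_apply]
        rw [Finset.card_empty, Nat.cast_zero, cfunZ1 n i.val j.val hn h hc]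
  · by_cases hc : j.val = n-2 ∨ j.val = n-1
    · refine (key {n+1} ?_ ?_).trans ?_
      · intro x hx; simp only [Finset.mem_singleton] at hx
        simp only [Finset.mem_range]; omega
      · intro t ht; rw [mcond_iff n i.val j.val t hn ht]
        simp only [Finset.mem_singleton]
        constructor
        · rintro (h'|h'|h'|h'|h'|h'|h') <;> omega
        · intro h'
          exact Or.inr (Or.inl (by omega))
      · simp only [Cmat, Matrix.of_apply]
        rw [Finset.card_singleton, Nat.cast_one, cfunB n i.val j.val hn h hc]
    · refine (key ∅ ?_ ?_).trans ?_
      · intro x hx; simp at hx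
      · intro t ht; rw [mcond_iff n i.val j.val t hn ht]
        simp only [Finset.notMem_empty, iff_false]
        rintro (h'|h'|h'|h'|h'|h'|h') <;> omega
      · simp only [Cmat, Matrix.of_apply]
        rw [Finset.card_empty, Nat.cast_zero, cfunZ2 n i.val j.val hn h hc]
  · by_cases hc : n ≤ j.val
    · refine (key (Finset.Ico (n+1) (2*n)) ?_ ?_).trans ?_
      · intro x hx; simp only [Finset.mem_Ico] at hx
        simp only [Finset.mem_range]; omega
      · intro t ht; rw [mcond_iff n i.val j.val t hn ht]
        simp only [Finset.mem_Ico]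
        constructor
        · rintro (h'|h'|h'|h'|h'|h'|h') <;> omega
        · intro h'
          exact Or.inr (Or.inr (Or.inl (by omega)))
      · simp only [Cmat, Matrix.of_apply]
        rw [Nat.card_Ico, show 2*n-(n+1) = n-1 from by omega,
            Nat.cast_sub (by omega), Nat.cast_one, cfunD n i.val j.val hn h hc]
    · refine (key (Finset.Ico (n+2) (2*n)) ?_ ?_).trans ?_
      · intro x hx; simp only [Finset.mem_Ico] at hx
        simp only [Finset.mem_range]; omega
      · intro t ht; rw [mcond_iff n i.val j.val t hn ht]
        simp only [Finset.mem_Ico]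
        constructor
        · rintro (h'|h'|h'|h'|h'|h'|h') <;> omega
        · intro h'
          exact Or.inr (Or.inr (Or.inl (by omega)))
      · simp only [Cmat, Matrix.of_apply]
        rw [Nat.card_Ico, show 2*n-(n+2) = n-2 from by omega,
            Nat.cast_sub (by omega), Nat.cast_ofNat,
            cfunC n i.val j.val hn h (by omega)]
  · refine (key {0} ?_ ?_).trans ?_
    · intro x hx; simp only [Finset.mem_singleton] at hx
      simp only [Finset.mem_range]; omega
    · intro t ht; rw [mcond_iff n i.val j.val t hn ht]
      simp only [Finset.mem_singleton]
      constructor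
      · rintro (h'|h'|h'|h'|h'|h'|h') <;> omega
      · intro h'
        exact Or.inr (Or.inr (Or.inr (Or.inl (by omega))))
    · simp only [Cmat, Matrix.of_apply]
      rw [Finset.card_singleton, Nat.cast_one, cfunE n i.val j.val hn h]
  · by_cases hc : j.val + 2 ≤ n
    · refine (key (Finset.Icc 1 (n-1)) ?_ ?_).trans ?_
      · intro x hx; simp only [Finset.mem_Icc] at hx
        simp only [Finset.mem_range]; omega
      · intro t ht; rw [mcond_iff n i.val j.val t hn ht]
        simp only [Finset.mem_Icc]
        constructor
        · rintro (h'|h'|h'|h'|h'|h'|h') <;> omega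
        · intro h'
          exact Or.inr (Or.inr (Or.inr (Or.inr (Or.inl (by omega)))))
      · simp only [Cmat, Matrix.of_apply]
        rw [Nat.card_Icc, show n-1+1-1 = n-1 from by omega,
            Nat.cast_sub (by omega), Nat.cast_one, cfunF n i.val j.val hn h hc]
    · refine (key (Finset.Icc 1 (n-2)) ?_ ?_).trans ?_
      · intro x hx; simp only [Finset.mem_Icc] at hx
        simp only [Finset.mem_range]; omega
      · intro t ht; rw [mcond_iff n i.val j.val t hn ht]
        simp only [Finset.mem_Icc]
        constructor
        · rintro (h'|h'|h'|h'|h'|h'|h') <;> omega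
        · intro h'
          exact Or.inr (Or.inr (Or.inr (Or.inr (Or.inl (by omega)))))
      · simp only [Cmat, Matrix.of_apply]
        rw [Nat.card_Icc, show n-2+1-1 = n-2 from by omega,
            Nat.cast_sub (by omega), Nat.cast_ofNat,
            cfunG n i.val j.val hn h (by omega)]
  · by_cases hc : j.val = n-1 ∨ j.val = n
    · refine (key {n-1} ?_ ?_).trans ?_
      · intro x hx; simp only [Finset.mem_singleton] at hx
        simp only [Finset.mem_range]; omega
      · intro t ht; rw [mcond_iff n i.val j.val t hn ht]
        simp only [Finset.mem_singleton]
        constructor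
        · rintro (h'|h'|h'|h'|h'|h'|h') <;> omega
        · intro h'
          exact Or.inr (Or.inr (Or.inr (Or.inr (Or.inr (Or.inl (by omega))))))
      · simp only [Cmat, Matrix.of_apply]
        rw [Finset.card_singleton, Nat.cast_one, cfunH n i.val j.val hn h hc]
    · refine (key ∅ ?_ ?_).trans ?_
      · intro x hx; simp at hx
      · intro t ht; rw [mcond_iff n i.val j.val t hn ht]
        simp only [Finset.notMem_empty, iff_false]
        rintro (h'|h'|h'|h'|h'|h'|h') <;> omega
      · simp only [Cmat, Matrix.of_apply]
        rw [Finset.card_empty, Nat.cast_zero, cfunZ6 n i.val j.val hn h hc]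
  · by_cases hc : j.val + 1 = i.val
    · refine (key {n-1} ?_ ?_).trans ?_
      · intro x hx; simp only [Finset.mem_singleton] at hx
        simp only [Finset.mem_range]; omega
      · intro t ht; rw [mcond_iff n i.val j.val t hn ht]
        simp only [Finset.mem_singleton]
        constructor
        · rintro (h'|h'|h'|h'|h'|h'|h') <;> omega
        · intro h'
          exact Or.inr (Or.inr (Or.inr (Or.inr (Or.inr (Or.inr (by omega))))))
      · simp only [Cmat, Matrix.of_apply]
        rw [Finset.card_singleton, Nat.cast_one, cfunI n i.val j.val hn h hc]
    · refine (key ∅ ?_ ?_).trans ?_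
      · intro x hx; simp at hx
      · intro t ht; rw [mcond_iff n i.val j.val t hn ht]
        simp only [Finset.notMem_empty, iff_false]
        rintro (h'|h'|h'|h'|h'|h'|h') <;> omega
      · simp only [Cmat, Matrix.of_apply]
        rw [Finset.card_empty, Nat.cast_zero, cfunZ7 n i.val j.val hn h hc]

set_option maxHeartbeats 1000000 in
set_option linter.unusedVariables false in
lemma part2 (n : ℕ) (hn : 3 ≤ n) :
    Tmat n + Jmat (2 * n - 1) * Tmat n * Jmat (2 * n - 1) + Umat (2 * n - 1) n
      + ((n : ℝ) - 2) • (Umat (2 * n - 1) (n - 1) + Umat (2 * n - 1) (n + 1))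
      = Cmat n := by
  ext i j
  have hi : i.val < 2*n-1 := i.isLt
  have hj : j.val < 2*n-1 := j.isLt
  simp only [Matrix.add_apply, Matrix.smul_apply, smul_eq_mul]
  rw [mulJ, Jmul]
  simp only [Tmat, Umat, Cmat, Matrix.of_apply, Fin.val_rev]
  rcases (show i.val + 1 ≤ n-3 ∨ i.val = n-3 ∨ i.val = n-2 ∨ i.val = n-1 ∨
      i.val = n ∨ i.val = n+1 ∨ n+2 ≤ i.val by omega) with h|h|h|h|h|h|h
  · by_cases hc : j.val = i.val + 1
    · rw [if_pos (by omega), if_neg (by omega), if_neg (by omega),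
          if_neg (by omega), if_neg (by omega), cfunA n i.val j.val hn h hc]
      ring
    · rw [if_neg (by omega), if_neg (by omega), if_neg (by omega),
          if_neg (by omega), if_neg (by omega), cfunZ1 n i.val j.val hn h hc]
      ring
  · by_cases hc : j.val = n-2 ∨ j.val = n-1
    · rw [if_pos (by omega), if_neg (by omega), if_neg (by omega),
          if_neg (by omega), if_neg (by omega), cfunB n i.val j.val hn h hc]
      ring
    · rw [if_neg (by omega), if_neg (by omega), if_neg (by omega),
          if_neg (by omega), if_neg (by omega), cfunZ2 n i.val j.val hn h hc]
      ring
  · by_cases hc : n ≤ j.val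
    · rw [if_pos (by omega), if_neg (by omega), if_neg (by omega),
          if_pos (by omega), if_neg (by omega), cfunD n i.val j.val hn h hc]
      ring
    · rw [if_neg (by omega), if_neg (by omega), if_neg (by omega),
          if_pos (by omega), if_neg (by omega), cfunC n i.val j.val hn h (by omega)]
      ring
  · rw [if_neg (by omega), if_neg (by omega), if_pos (by omega),
        if_neg (by omega), if_neg (by omega), cfunE n i.val j.val hn h]
    ring
  · by_cases hc : j.val + 2 ≤ n
    · rw [if_neg (by omega), if_pos (by omega), if_neg (by omega),
          if_neg (by omega), if_pos (by omega), cfunF n i.val j.val hn h hc]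
      ring
    · rw [if_neg (by omega), if_neg (by omega), if_neg (by omega),
          if_neg (by omega), if_pos (by omega), cfunG n i.val j.val hn h (by omega)]
      ring
  · by_cases hc : j.val = n-1 ∨ j.val = n
    · rw [if_neg (by omega), if_pos (by omega), if_neg (by omega),
          if_neg (by omega), if_neg (by omega), cfunH n i.val j.val hn h hc]
      ring
    · rw [if_neg (by omega), if_neg (by omega), if_neg (by omega),
          if_neg (by omega), if_neg (by omega), cfunZ6 n i.val j.val hn h hc]
      ring
  · by_cases hc : j.val + 1 = i.val
    · rw [if_neg (by omega), if_pos (by omega), if_neg (by omega),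
          if_neg (by omega), if_neg (by omega), cfunI n i.val j.val hn h hc]
      ring
    · rw [if_neg (by omega), if_neg (by omega), if_neg (by omega),
          if_neg (by omega), if_neg (by omega), cfunZ7 n i.val j.val hn h hc]
      ring


theorem stmt5 (n : ℕ) (hn : 3 ≤ n) :
    (∀ i j : Fin (2 * n - 1),
      (∑ t : Fin (2 * n), Mmat n ((⟨0, by omega⟩ : Fin (2 * n)), i) (t, j))
        = Cmat n i j) ∧
    Tmat n + Jmat (2 * n - 1) * Tmat n * Jmat (2 * n - 1) + Umat (2 * n - 1) n
      + ((n : ℝ) - 2) • (Umat (2 * n - 1) (n - 1) + Umat (2 * n - 1) (n + 1))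
      = Cmat n := by
  exact ⟨fun i j => part1 n hn i j, part2 n hn⟩
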